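/- Discrete approximation of measures in a star decomposition: in the setting of the previous lemma (compact (Z,δ), Zₙ = Xₙ ∪ ⊔ᵢ Yₙ⁽ⁱ⁾ with sup_i diam(Yₙ⁽ⁱ⁾) → 0, points yₙ⁽ⁱ⁾ ∈ Yₙ⁽ⁱ⁾ chosen, γₙ⁽ⁱ⁾ = μₙ(Yₙ⁽ⁱ⁾ \ Xₙ), μₙˣ = μₙ(· ∩ Xₙ)), define μ̃ₙ = μₙˣ + Σᵢ γₙ⁽ⁱ⁾·δ_{yₙ⁽ⁱ⁾}. Then δ_P(μ̃ₙ, μₙ) → 0 as n → ∞. In fact, the deterministic statement holds: if sup_i diam(Yₙ⁽ⁱ⁾) ≤ ε then δ_P(μ̃ₙ, μₙ) ≤ ε. -/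
import Mathlib


open Metric Set MeasureTheory

/-- Discrete approximation of a measure in a star decomposition: if `μ` is a finite
Borel measure carried by `X ∪ ⊔ᵢ Y⁽ⁱ⁾`, the `Y⁽ⁱ⁾` are pairwise disjoint Borel sets of
diameter at most `ε` with chosen points `y⁽ⁱ⁾ ∈ Y⁽ⁱ⁾`, then the measure
`μ̃ = μ(·∩X) + Σᵢ μ(Y⁽ⁱ⁾ \ X)·δ_{y⁽ⁱ⁾}` satisfies `δ_P(μ̃, μ) ≤ ε`. -/
theorem stmt_17 {Z : Type*} [MetricSpace Z] [CompactSpace Z]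
    [MeasurableSpace Z] [BorelSpace Z]
    (μ : Measure Z) [IsFiniteMeasure μ]
    (X : Set Z) (hX : MeasurableSet X)
    (Y : ℕ → Set Z) (hY : ∀ i, MeasurableSet (Y i))
    (hYdisj : Pairwise (Function.onFun Disjoint Y))
    (ε : ℝ) (hε : 0 < ε) (hdiam : ∀ i, diam (Y i) ≤ ε)
    (y : ℕ → Z) (hy : ∀ i, y i ∈ Y i)
    (hsupp : μ ((X ∪ ⋃ i, Y i)ᶜ) = 0) :
    levyProkhorovDist
      (μ.restrict X + Measure.sum (fun i => μ (Y i \ X) • Measure.dirac (y i))) μ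
      ≤ ε := by
  classical
  set ν : Measure Z :=
    μ.restrict X + Measure.sum (fun i => μ (Y i \ X) • Measure.dirac (y i)) with hν
  -- the value of ν on a measurable set
  have hν_apply : ∀ (S : Set Z), MeasurableSet S →
      ν S = μ (S ∩ X) + ∑' i, (S.indicator (fun _ => μ (Y i \ X)) (y i)) := by
    intro S hS
    simp only [hν, Measure.add_apply, Measure.restrict_apply hS, Measure.sum_apply _ hS,
      Measure.smul_apply, smul_eq_mul, Measure.dirac_apply' _ hS]
    congr 1
    refine tsum_congr fun i => ?_
    by_cases h : y i ∈ S <;> simp [h]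
  have hεfin : ENNReal.ofReal ε ≠ ⊤ := ENNReal.ofReal_ne_top
  have key : levyProkhorovEDist ν μ ≤ ENNReal.ofReal ε := by
    apply levyProkhorovEDist_le_of_forall
    intro ε' B hε' hε'top hB
    have htR : ε < ε'.toReal := by
      have := (ENNReal.toReal_lt_toReal hεfin hε'top.ne).mpr hε'
      rwa [ENNReal.toReal_ofReal hε.le] at this
    set t := ε'.toReal with ht
    have hBt : B ⊆ thickening t B := self_subset_thickening (hε.trans htR) B
    -- points of Y i near points of Y i ∩ B are in the thickening
    have hnear : ∀ i, ∀ a ∈ Y i, ∀ b ∈ Y i, b ∈ B → a ∈ thickening t B := by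
      intro i a ha b hb hbB
      rw [mem_thickening_iff]
      exact ⟨b, hbB, lt_of_le_of_lt
        ((dist_le_diam_of_mem (isCompact_univ.isBounded.subset (Set.subset_univ _)) ha hb).trans
          (hdiam i)) htR⟩
    constructor
    · -- ν B ≤ μ (thickening t B) + ε'
      rw [hν_apply B hB]
      set V : ℕ → Set Z := fun i => if y i ∈ B then Y i \ X else ∅ with hV
      have hVm : ∀ i, MeasurableSet (V i) := by
        intro i; by_cases h : y i ∈ B <;> simp [hV, h, (hY i).diff hX]
      have hVd : Pairwise (Function.onFun Disjoint V) := by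
        intro i j hij
        have := hYdisj hij
        simp only [Function.onFun, hV]
        split_ifs <;>
          simp_all [Set.disjoint_left]
      have hsum : ∑' i, (B.indicator (fun _ => μ (Y i \ X)) (y i)) = μ (⋃ i, V i) := by
        rw [measure_iUnion hVd hVm]
        refine tsum_congr fun i => ?_
        by_cases h : y i ∈ B <;> simp [hV, h]
      rw [hsum, ← measure_union _ ((MeasurableSet.iUnion hVm))]
      · refine le_trans (le_trans (measure_mono ?_) (le_add_right le_rfl)) le_rfl
        refine Set.union_subset ((Set.inter_subset_left).trans hBt) (Set.iUnion_subset fun i => ?_)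
        simp only [hV]
        split_ifs with h
        · exact fun a ha => hnear i a ha.1 (y i) (hy i) h
        · simp
      · refine Set.disjoint_left.mpr fun a ha hb => ?_
        obtain ⟨i, hi⟩ := Set.mem_iUnion.mp hb
        simp only [hV] at hi
        split_ifs at hi with h
        · exact hi.2 ha.2
        · exact hi
    · -- μ B ≤ ν (thickening t B) + ε'
      rw [hν_apply (thickening t B) isOpen_thickening.measurableSet]
      have hBsub : μ B ≤ μ ((B ∩ X) ∪ ⋃ i, B ∩ (Y i \ X)) := by
        have : B ⊆ ((B ∩ X) ∪ ⋃ i, B ∩ (Y i \ X)) ∪ (X ∪ ⋃ i, Y i)ᶜ := by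
          intro a ha
          by_cases hx : a ∈ X
          · exact Or.inl (Or.inl ⟨ha, hx⟩)
          · by_cases hy' : a ∈ ⋃ i, Y i
            · obtain ⟨i, hi⟩ := Set.mem_iUnion.mp hy'
              exact Or.inl (Or.inr (Set.mem_iUnion.mpr ⟨i, ha, hi, hx⟩))
            · refine Or.inr fun hc => ?_
              rcases hc with h1 | h2
              exacts [hx h1, hy' h2]
        calc μ B ≤ μ (((B ∩ X) ∪ ⋃ i, B ∩ (Y i \ X)) ∪ (X ∪ ⋃ i, Y i)ᶜ) := measure_mono this
          _ ≤ μ ((B ∩ X) ∪ ⋃ i, B ∩ (Y i \ X)) + μ ((X ∪ ⋃ i, Y i)ᶜ) := measure_union_le _ _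
          _ = μ ((B ∩ X) ∪ ⋃ i, B ∩ (Y i \ X)) := by rw [hsupp, add_zero]
      refine le_trans hBsub (le_trans (le_trans (measure_union_le _ _) ?_) (le_add_right le_rfl))
      refine add_le_add (measure_mono (Set.inter_subset_inter_left X hBt)) ?_
      refine le_trans (measure_iUnion_le _) (ENNReal.tsum_le_tsum fun i => ?_)
      by_cases h : (B ∩ (Y i \ X)).Nonempty
      · obtain ⟨a, haB, haY, _⟩ := h
        have hyi : y i ∈ thickening t B := hnear i (y i) (hy i) a haY haB
        simp only [Set.indicator_of_mem hyi]
        exact measure_mono (fun z hz => hz.2)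
      · rw [Set.not_nonempty_iff_eq_empty] at h
        simp [h]
  have := ENNReal.toReal_mono hεfin key
  rwa [ENNReal.toReal_ofReal hε.le] at this
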